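/- Let a ∈ k and let D = e_{-1} + a·e_{p-2}, regarded as a k-linear endomorphism of A = k[X]/(X^p). Then for every integer i with 2 ≤ i ≤ p-1 one has D^i(x) = a·((p-1)!/(p-i)!)·x^{p-i} (where the integer (p-1)!/(p-i)! is interpreted in k), and consequently D^p = -a·D as endomorphisms of A (powers taken with respect to composition). -/
import Mathlib


open Polynomial

set_option synthInstance.maxHeartbeats 1000000
set_option maxHeartbeats 1000000

noncomputable section

/-- The truncated polynomial ring `A = k[X]/(X^p)`. -/
abbrev TruncPoly (k : Type*) [Field k] (p : ℕ) : Type _ :=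
  k[X] ⧸ Ideal.span {(X : k[X]) ^ p}

/-- The image `x` of `X` in `A = k[X]/(X^p)`. -/
def xgen (k : Type*) [Field k] (p : ℕ) : TruncPoly k p :=
  Ideal.Quotient.mk _ (X : k[X])

/-- The Witt algebra `W = Der_k(A)`, a Lie algebra over `k`.
Its `k`-basis is `e_i = x^(i+1)∂` for `-1 ≤ i ≤ p-2`; below, `E n` denotes
`x^n • ∂`, i.e. `E n = e_(n-1)`, so the basis is `E 0, …, E (p-1)`. -/
abbrev Witt (k : Type*) [Field k] (p : ℕ) : Type _ :=
  Derivation k (TruncPoly k p) (TruncPoly k p)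

/-- The Zariski closure of a subset of affine `n`-space `k^n`:  the zero locus of the
vanishing ideal of `S`, i.e. the set of points at which every polynomial vanishing
identically on `S` vanishes. -/
def zariskiClosure (k : Type*) [CommSemiring k] {n : ℕ} (S : Set (Fin n → k)) :
    Set (Fin n → k) :=
  {y | ∀ f : MvPolynomial (Fin n) k,
      (∀ s ∈ S, MvPolynomial.eval s f = 0) → MvPolynomial.eval y f = 0}

/-- for `D = e₋₁ + a·e_(p-2)` regarded as an endomorphism of `A`,
`D^i(x) = a·((p-1)!/(p-i)!)·x^(p-i)` for `2 ≤ i ≤ p-1`, and `D^p = -a·D`. -/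
theorem witt_Dpowers
    (k : Type*) [Field k] [IsAlgClosed k] (p : ℕ) [Fact p.Prime] [CharP k p]
    (hp : 3 < p)
    (δ : Witt k p) (hδ : δ (xgen k p) = 1)
    (E : ℕ → Witt k p) (hE : ∀ n, E n = (xgen k p) ^ n • δ)
    (a : k) :
    (∀ i : ℕ, 2 ≤ i → i ≤ p - 1 →
      (((E 0 + a • E (p - 1)).toLinearMap : Module.End k (TruncPoly k p)) ^ i) (xgen k p)
        = (a * ((Nat.factorial (p - 1) / Nat.factorial (p - i) : ℕ) : k))
            • (xgen k p) ^ (p - i))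
    ∧ ((E 0 + a • E (p - 1)).toLinearMap : Module.End k (TruncPoly k p)) ^ p
        = (-a) • ((E 0 + a • E (p - 1)).toLinearMap : Module.End k (TruncPoly k p)) := by
  set x := xgen k p with hxdef
  set D : Witt k p := E 0 + a • E (p - 1) with hD
  set L : Module.End k (TruncPoly k p) := D.toLinearMap with hL
  have hLapp : ∀ v, L v = D v := fun v => rfl
  -- x ^ p = 0
  have hxp : x ^ p = 0 := by
    show (Ideal.Quotient.mk _ (X : k[X])) ^ p = 0
    rw [← map_pow]
    exact Ideal.Quotient.eq_zero_iff_mem.2 (Ideal.subset_span (Set.mem_singleton _))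
  have hxm : ∀ m, p ≤ m → x ^ m = 0 := by
    intro m hm
    rw [← Nat.add_sub_cancel' hm, pow_add, hxp, zero_mul]
  -- value of D at x
  have hDx : D x = 1 + a • x ^ (p - 1) := by
    rw [hD, Derivation.add_apply, Derivation.smul_apply, hE, hE, pow_zero, one_smul,
      Derivation.smul_apply, hδ, smul_eq_mul, mul_one]
  have hLx : L x = 1 + a • x ^ (p - 1) := by rw [hLapp, hDx]
  have hL1 : L 1 = 0 := by rw [hLapp]; exact D.map_one_eq_zero
  -- action on powers
  have hLpow : ∀ n, 2 ≤ n → L (x ^ n) = n • x ^ (n - 1) := by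
    intro n hn
    rw [hLapp, Derivation.leibniz_pow, hDx, smul_add, smul_eq_mul, mul_one,
      smul_comm (x ^ (n-1)) a, smul_eq_mul, ← pow_add]
    have : n - 1 + (p - 1) ≥ p := by omega
    rw [hxm _ this, smul_zero, add_zero]
  -- key part-1 lemma with descFactorial
  have key : ∀ i : ℕ, 2 ≤ i → i ≤ p - 1 →
      (L ^ i) x = (a * ((p - 1).descFactorial (i - 1) : k)) • x ^ (p - i) := by
    intro i hi
    induction i, hi using Nat.le_induction with
    | base =>
      intro _
      have h2 : (L ^ 2) x = L (L x) := by
        rw [pow_two]; rfl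
      rw [h2, hLx, map_add, hL1, zero_add, map_smul, hLpow _ (by omega)]
      have he : p - 1 - 1 = p - 2 := by omega
      rw [he, ← Nat.cast_smul_eq_nsmul k, smul_smul, Nat.descFactorial_succ,
        Nat.descFactorial_zero, Nat.sub_zero, Nat.mul_one]
    | succ i hi2 ih =>
      intro hile
      have ihh := ih (by omega)
      have hstep : (L ^ (i+1)) x = L ((L ^ i) x) := by
        rw [pow_succ']; rfl
      rw [hstep, ihh, map_smul, hLpow _ (by omega)]
      have hd : (p - 1).descFactorial (i + 1 - 1) = (p - i) * (p - 1).descFactorial (i - 1) := by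
        have h4 : i + 1 - 1 = (i - 1) + 1 := by omega
        have h3 : p - 1 - (i - 1) = p - i := by omega
        rw [h4, Nat.descFactorial_succ, h3]
      rw [hd]
      have hexp : p - i - 1 = p - (i + 1) := by omega
      rw [hexp, ← Nat.cast_smul_eq_nsmul k, smul_smul]
      push_cast
      ring_nf
  -- Wilson's theorem in k
  have hwilson : (((p - 1).factorial : ℕ) : k) = -1 := by
    have h1 : ((ZMod.castHom (dvd_refl p) k) (((p - 1).factorial : ℕ) : ZMod p))
        = (((p - 1).factorial : ℕ) : k) := map_natCast _ _
    rw [← h1, ZMod.wilsons_lemma, map_neg, map_one]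
  -- claim A
  have claimA : ∀ n : ℕ, 1 ≤ n → n ≤ p - 1 →
      (L ^ n) (x ^ n) = n.factorial • (1 + a • x ^ (p - 1)) := by
    intro n hn
    induction n, hn using Nat.le_induction with
    | base => intro _; simpa using hLx
    | succ n hn ih =>
      intro hle
      have h1 : (L ^ (n + 1)) (x ^ (n + 1)) = (L ^ n) (L (x ^ (n + 1))) := by
        rw [pow_succ]; rfl
      rw [h1, hLpow _ (by omega), Nat.add_sub_cancel, map_nsmul, ih (by omega),
        smul_smul, Nat.factorial_succ]
  -- claim B
  have claimB : ∀ j : ℕ, 1 ≤ j → j ≤ p - 2 →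
      (L ^ j) (1 + a • x ^ (p - 1))
        = (a * ((p - 1).descFactorial j : k)) • x ^ (p - 1 - j) := by
    intro j hj1 hj2
    have hk := key (j + 1) (by omega) (by omega)
    have hsplit : (L ^ (j + 1)) x = (L ^ j) (L x) := by rw [pow_succ]; rfl
    rw [hsplit, hLx] at hk
    have e1 : j + 1 - 1 = j := by omega
    have e2 : p - (j + 1) = p - 1 - j := by omega
    rw [e1, e2] at hk
    exact hk
  -- monomial claim for part 2
  have hmono : ∀ n : ℕ, (L ^ p) (x ^ n) = (-a) • L (x ^ n) := by
    intro n
    have hp1 : p - 1 + 1 = p := by omega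
    rcases Nat.lt_or_ge n p with hnp | hnp
    swap
    · rw [hxm n hnp, map_zero, map_zero, smul_zero]
    rcases Nat.eq_zero_or_pos n with h0 | h1
    · subst h0
      have hLp : L ^ p = L ^ (p - 1) * L := by rw [← pow_succ, hp1]
      rw [pow_zero, hLp, Module.End.mul_apply, hL1, map_zero, smul_zero]
    rcases Nat.lt_or_ge n 2 with h2 | h2
    · -- n = 1
      have hn1 : n = 1 := by omega
      subst hn1
      have hk := key (p - 1) (by omega) le_rfl
      have hLp : L ^ p = L * L ^ (p - 1) := by rw [← pow_succ', hp1]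
      have e3 : p - (p - 1) = 1 := by omega
      rw [e3, pow_one] at hk
      rw [pow_one, hLp, Module.End.mul_apply, hk, map_smul]
      have hdesc : ((p - 1).descFactorial (p - 1 - 1) : k) = -1 := by
        rw [Nat.descFactorial_eq_div (by omega : p - 1 - 1 ≤ p - 1)]
        have e4 : p - 1 - (p - 1 - 1) = 1 := by omega
        rw [e4, Nat.factorial_one, Nat.div_one, hwilson]
      rw [hdesc, mul_neg_one]
    · -- 2 ≤ n ≤ p - 1
      have hnle : n ≤ p - 1 := by omega
      have hsplit : L ^ p = L ^ (p - n) * L ^ n := by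
        rw [← pow_add]; congr 1; omega
      rw [hsplit, Module.End.mul_apply, claimA n (by omega) hnle, map_nsmul,
        claimB (p - n) (by omega) (by omega), hLpow n h2]
      have e5 : p - 1 - (p - n) = n - 1 := by omega
      rw [e5, ← Nat.cast_smul_eq_nsmul k (n.factorial), ← Nat.cast_smul_eq_nsmul k n,
        smul_smul, smul_smul]
      congr 1
      -- scalar identity
      have hdvd : (n - 1).factorial ∣ (p - 1).factorial :=
        Nat.factorial_dvd_factorial (by omega)
      obtain ⟨m, hm⟩ := hdvd
      have hdiv : (p - 1).factorial / (n - 1).factorial = m := by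
        rw [hm]; exact Nat.mul_div_cancel_left m (Nat.factorial_pos _)
      have hnfac : n.factorial = n * (n - 1).factorial := by
        conv_lhs => rw [show n = (n - 1) + 1 by omega, Nat.factorial_succ,
          show n - 1 + 1 = n by omega]
      have hdescval : (p - 1).descFactorial (p - n) = m := by
        rw [Nat.descFactorial_eq_div (by omega : p - n ≤ p - 1),
          show p - 1 - (p - n) = n - 1 by omega, hdiv]
      have hkey2 : (n.factorial : k) * ((p - 1).descFactorial (p - n) : k)
          = -(n : k) := by
        rw [hdescval, hnfac]
        push_cast
        have : ((n - 1).factorial : k) * (m : k) = -1 := by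
          rw [← Nat.cast_mul, ← hm, hwilson]
        calc ((n : k) * ((n - 1).factorial : k)) * (m : k)
            = (n : k) * (((n - 1).factorial : k) * (m : k)) := by ring
          _ = -(n : k) := by rw [this]; ring
      calc (n.factorial : k) * (a * ((p - 1).descFactorial (p - n) : k))
          = a * ((n.factorial : k) * ((p - 1).descFactorial (p - n) : k)) := by ring
        _ = -a * (n : k) := by rw [hkey2]; ring
  constructor
  · intro i hi2 hip
    have hk := key i hi2 hip
    rw [Nat.descFactorial_eq_div (by omega : i - 1 ≤ p - 1),
      show p - 1 - (i - 1) = p - i by omega] at hk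
    exact hk
  · apply LinearMap.ext
    intro y
    obtain ⟨f, rfl⟩ := Ideal.Quotient.mk_surjective y
    rw [LinearMap.smul_apply]
    induction f using Polynomial.induction_on' with
    | add f g hf hg => rw [map_add, map_add, map_add, smul_add, hf, hg]
    | monomial n b =>
      have hmkC : (Ideal.Quotient.mk (Ideal.span {(X : k[X]) ^ p}) (C b) : TruncPoly k p)
          = algebraMap k (TruncPoly k p) b := rfl
      have hrepr : (Ideal.Quotient.mk (Ideal.span {(X : k[X]) ^ p}) (monomial n b)
            : TruncPoly k p) = b • x ^ n := by
        rw [← Polynomial.C_mul_X_pow_eq_monomial, map_mul, map_pow, hmkC,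
          ← Algebra.smul_def]
        rfl
      rw [hrepr, map_smul, map_smul, hmono n, smul_comm]
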